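/- A Tychonoff (completely regular Hausdorff) space X belongs to Frolík's class 𝔓* if and only if X is selectively ω-bounded. Here X ∈ 𝔓* means: every infinite family of pairwise disjoint nonempty open subsets of X has an infinite subfamily each member of which meets some fixed compact set. -/

import Mathlib

open Filter Topology Set

def SelectivelyOmegaBounded (X : Type*) [TopologicalSpace X] : Prop :=
  ∀ U : ℕ → Set X, (∀ n, IsOpen (U n)) → (∀ n, (U n).Nonempty) →
    ∃ x : ℕ → X, (∀ n, x n ∈ U n) ∧
      ∃ φ : ℕ → ℕ, StrictMono φ ∧ IsCompact (closure (Set.range (x ∘ φ)))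

def Pseudocompact (X : Type*) [TopologicalSpace X] : Prop :=
  ∀ f : C(X, ℝ), ∃ M : ℝ, ∀ x, |f x| ≤ M

def EquicontinuousSet {X : Type*} [TopologicalSpace X] (S : Set C(X, ℝ)) : Prop :=
  Equicontinuous (fun f : S => ⇑(f : C(X, ℝ)))

def AscoliSpace (X : Type*) [TopologicalSpace X] : Prop :=
  ∀ S : Set C(X, ℝ), IsCompact S → EquicontinuousSet S

def SeqAscoliSpace (X : Type*) [TopologicalSpace X] : Prop :=
  ∀ (f : ℕ → C(X, ℝ)) (g : C(X, ℝ)), Tendsto f atTop (𝓝 g) →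
    EquicontinuousSet (insert g (Set.range f))

def FrolikPStar (X : Type*) [TopologicalSpace X] : Prop :=
  ∀ V : ℕ → Set X, (∀ n, IsOpen (V n)) → (∀ n, (V n).Nonempty) →
    Pairwise (Function.onFun Disjoint V) →
    ∃ K : Set X, IsCompact K ∧ {n : ℕ | (V n ∩ K).Nonempty}.Infinite

section AuxStmt5

variable {X : Type*} [TopologicalSpace X]

private lemma chain_exists_stmt5 {S : Type*} (R : S → S → Prop) (s0 : S)
    (h : ∀ s, ∃ t, R s t) :
    ∃ f : ℕ → S, f 0 = s0 ∧ ∀ n, R (f n) (f (n + 1)) := by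
  refine ⟨fun n => Nat.rec s0 (fun _ s => Classical.choose (h s)) n, rfl, fun n => ?_⟩
  exact Classical.choose_spec (h _)

private lemma chain_exists_stmt5' {S : Type*} (Inv : S → Prop) (R : S → S → Prop) (s0 : S)
    (h0 : Inv s0) (h : ∀ s, Inv s → ∃ t, Inv t ∧ R s t) :
    ∃ f : ℕ → S, f 0 = s0 ∧ (∀ n, Inv (f n)) ∧ ∀ n, R (f n) (f (n + 1)) := by
  obtain ⟨g, hg0, hgR⟩ := chain_exists_stmt5 (fun a b : {s : S // Inv s} => R a.1 b.1) ⟨s0, h0⟩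
    (fun s => by obtain ⟨t, ht, hR⟩ := h s.1 s.2; exact ⟨⟨t, ht⟩, hR⟩)
  exact ⟨fun n => (g n).1, congrArg Subtype.val hg0, fun n => (g n).2, hgR⟩

private lemma shrink_stmt5 [RegularSpace X] {O : Set X} (hO : IsOpen O) (hne : O.Nonempty) :
    ∃ V : Set X, V.Nonempty ∧ IsOpen V ∧ closure V ⊆ O := by
  obtain ⟨x, hx⟩ := hne
  obtain ⟨C, ⟨hCmem, hCcl⟩, hCO⟩ := (closed_nhds_basis x).mem_iff.mp (hO.mem_nhds hx)
  refine ⟨interior C, ⟨x, mem_interior_iff_mem_nhds.mpr hCmem⟩, isOpen_interior, ?_⟩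
  exact (closure_minimal interior_subset hCcl).trans hCO

private lemma no_disjoint_family_stmt5 (hP : FrolikPStar X) {U : ℕ → Set X}
    (hfin : ∀ K : Set X, IsCompact K → {n | (U n ∩ K).Nonempty}.Finite)
    (V : ℕ → Set X) (φ : ℕ → ℕ) (hφ : StrictMono φ)
    (hVo : ∀ k, IsOpen (V k)) (hVne : ∀ k, (V k).Nonempty)
    (hVU : ∀ k, V k ⊆ U (φ k)) (hdis : ∀ j k, j < k → Disjoint (V j) (V k)) : False := by
  have hpair : Pairwise (Function.onFun Disjoint V) := by
    intro i j hij
    rcases hij.lt_or_gt with h | h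
    · exact hdis i j h
    · exact (hdis j i h).symm
  obtain ⟨K, hK, hinf⟩ := hP V hVo hVne hpair
  have himg : (φ '' {k | (V k ∩ K).Nonempty}).Infinite := hinf.image hφ.injective.injOn
  have hsub : φ '' {k | (V k ∩ K).Nonempty} ⊆ {n | (U n ∩ K).Nonempty} := by
    rintro n ⟨k, hk, rfl⟩
    obtain ⟨y, hy1, hy2⟩ := hk
    exact ⟨y, hVU k hy1, hy2⟩
  exact (hfin K hK).not_infinite (himg.mono hsub)

private lemma step_lemma_stmt5 [RegularSpace X] (hP : FrolikPStar X) {U : ℕ → Set X}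
    (hUo : ∀ n, IsOpen (U n)) (hUne : ∀ n, (U n).Nonempty)
    (hfin : ∀ K : Set X, IsCompact K → {n | (U n ∩ K).Nonempty}.Finite)
    (C : Set X) (J : Set ℕ) (hC : IsOpen C) (hJ : J.Infinite)
    (hmeet : ∀ n ∈ J, (U n ∩ C).Nonempty) :
    ∃ (C' : Set X) (J' : Set ℕ) (m : ℕ), m ∈ J ∧ IsOpen C' ∧ closure C' ⊆ C ∧ C' ⊆ U m ∧
      J'.Infinite ∧ ∀ j ∈ J', m < j ∧ j ∈ J ∧ (U j ∩ C').Nonempty := by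
  by_cases hA : ∃ m ∈ J, ∃ V : Set X, V.Nonempty ∧ IsOpen V ∧ closure V ⊆ U m ∩ C ∧
      {j | j ∈ J ∧ m < j ∧ (U j ∩ V).Nonempty}.Infinite
  · obtain ⟨m, hm, V, hVne, hVo, hVcl, hVinf⟩ := hA
    refine ⟨V, {j | j ∈ J ∧ m < j ∧ (U j ∩ V).Nonempty}, m, hm, hVo,
      hVcl.trans inter_subset_right,
      subset_closure.trans (hVcl.trans inter_subset_left), hVinf, ?_⟩
    rintro j ⟨hjJ, hjm, hjne⟩
    exact ⟨hjm, hjJ, hjne⟩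
  · push_neg at hA
    exfalso
    have hB : ∀ m ∈ J, ∀ V : Set X, V.Nonempty → IsOpen V → closure V ⊆ U m ∩ C →
        {j | j ∈ J ∧ m < j ∧ (U j ∩ V).Nonempty}.Finite := by
      intro m hm V h1 h2 h3
      exact hA m hm V h1 h2 h3
    -- inner state: (n, V, W)
    obtain ⟨n0, hn0⟩ := hJ.nonempty
    obtain ⟨V0, hV0ne, hV0o, hV0cl⟩ := shrink_stmt5 ((hUo n0).inter hC) (hmeet n0 hn0)
    have hfin0 : {j | j ∈ J ∧ (U j ∩ V0).Nonempty}.Finite := by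
      refine ((hB n0 hn0 V0 hV0ne hV0o hV0cl).union (Set.finite_Iic n0)).subset ?_
      rintro j ⟨hjJ, hjne⟩
      rcases le_or_gt j n0 with h | h
      · exact Or.inr h
      · exact Or.inl ⟨hjJ, h, hjne⟩
    obtain ⟨g, hg0, hInv, hR⟩ := chain_exists_stmt5'
      (fun q : ℕ × Set X × Set X => q.1 ∈ J ∧ IsOpen q.2.1 ∧ q.2.1.Nonempty ∧
        closure q.2.1 ⊆ U q.1 ∩ C ∧ q.2.1 ⊆ q.2.2 ∧
        {j | j ∈ J ∧ (U j ∩ q.2.2).Nonempty}.Finite)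
      (fun s t => s.1 < t.1 ∧ s.2.2 ⊆ t.2.2 ∧ U t.1 ∩ s.2.2 = ∅)
      (n0, V0, V0)
      ⟨hn0, hV0o, hV0ne, hV0cl, subset_rfl, hfin0⟩
      (by
        rintro q ⟨hqJ, hqo, hqne, hqcl, hqsub, hqfin⟩
        obtain ⟨n', hn'⟩ := (hJ.diff (hqfin.union (Set.finite_Iic q.1))).nonempty
        have hn'J : n' ∈ J := hn'.1
        have hgt : q.1 < n' := by
          by_contra h
          exact hn'.2 (Set.mem_union_right _ (by simpa using not_lt.mp h))
        have hempty : U n' ∩ q.2.2 = ∅ := by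
          have : ¬(U n' ∩ q.2.2).Nonempty := fun hne' =>
            hn'.2 (Set.mem_union_left _ ⟨hn'J, hne'⟩)
          rwa [Set.not_nonempty_iff_eq_empty] at this
        obtain ⟨V', hV'ne, hV'o, hV'cl⟩ := shrink_stmt5 ((hUo n').inter hC) (hmeet n' hn'J)
        refine ⟨(n', V', q.2.2 ∪ V'), ⟨hn'J, hV'o, hV'ne, hV'cl, subset_union_right, ?_⟩,
          hgt, subset_union_left, hempty⟩
        refine ((hqfin.union ((hB n' hn'J V' hV'ne hV'o hV'cl).union
          (Set.finite_Iic n'))).subset ?_)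
        rintro j ⟨hjJ, x, hx1, hx2⟩
        rcases hx2 with h | h
        · exact Or.inl ⟨hjJ, x, hx1, h⟩
        · rcases le_or_gt j n' with hle | hlt
          · exact Or.inr (Or.inr hle)
          · exact Or.inr (Or.inl ⟨hjJ, hlt, x, hx1, h⟩))
    set nseq : ℕ → ℕ := fun k => (g k).1 with hnseq
    set Vs : ℕ → Set X := fun k => (g k).2.1 with hVs
    set Ws : ℕ → Set X := fun k => (g k).2.2 with hWs
    have hnmono : StrictMono nseq := strictMono_nat_of_lt_succ fun k => (hR k).1
    have hWmono : Monotone Ws := monotone_nat_of_le_succ fun k => (hR k).2.1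
    have hVU : ∀ k, Vs k ⊆ U (nseq k) := fun k x hx =>
      ((hInv k).2.2.2.1 (subset_closure hx)).1
    have hdis : ∀ j k, j < k → Disjoint (Vs j) (Vs k) := by
      intro j k hjk
      obtain ⟨k', rfl⟩ : ∃ k', k = k' + 1 := ⟨k - 1, by omega⟩
      have hemp := (hR k').2.2
      rw [Set.disjoint_left]
      intro x hxj hxk
      have hxU : x ∈ U (nseq (k' + 1)) := hVU _ hxk
      have hxW : x ∈ Ws k' := hWmono (by omega : j ≤ k') ((hInv j).2.2.2.2.1 hxj)
      have hmem : x ∈ U (nseq (k' + 1)) ∩ Ws k' := ⟨hxU, hxW⟩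
      rw [hemp] at hmem
      exact hmem
    exact no_disjoint_family_stmt5 hP hfin Vs nseq hnmono (fun k => (hInv k).2.1)
      (fun k => (hInv k).2.2.1) hVU hdis

private lemma key_stmt5 [RegularSpace X] (hP : FrolikPStar X) (U : ℕ → Set X)
    (hUo : ∀ n, IsOpen (U n)) (hUne : ∀ n, (U n).Nonempty) :
    ∃ K : Set X, IsCompact K ∧ {n | (U n ∩ K).Nonempty}.Infinite := by
  by_contra hcon
  push_neg at hcon
  have hfin : ∀ K : Set X, IsCompact K → {n | (U n ∩ K).Nonempty}.Finite := fun K hK =>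
    hcon K hK
  -- initial state
  obtain ⟨C0, J0, m0, _, hC0o, _, hC0U, hJ0inf, hJ0⟩ :=
    step_lemma_stmt5 hP hUo hUne hfin Set.univ Set.univ isOpen_univ Set.infinite_univ
      (fun n _ => by simpa using hUne n)
  obtain ⟨f, _, hInv, hR⟩ := chain_exists_stmt5'
    (fun p : Set X × Set ℕ × ℕ => IsOpen p.1 ∧ p.2.1.Infinite ∧
      (∀ n ∈ p.2.1, (U n ∩ p.1).Nonempty) ∧ p.1 ⊆ U p.2.2 ∧ ∀ j ∈ p.2.1, p.2.2 < j)
    (fun s t => s.2.2 < t.2.2 ∧ closure t.1 ⊆ s.1)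
    (C0, J0, m0)
    ⟨hC0o, hJ0inf, fun n hn => (hJ0 n hn).2.2, hC0U, fun j hj => (hJ0 j hj).1⟩
    (by
      rintro p ⟨hpo, hpinf, hpmeet, hpU, hpgt⟩
      obtain ⟨C', J', m, hmJ, hC'o, hC'cl, hC'U, hJ'inf, hJ'⟩ :=
        step_lemma_stmt5 hP hUo hUne hfin p.1 p.2.1 hpo hpinf hpmeet
      exact ⟨(C', J', m), ⟨hC'o, hJ'inf, fun n hn => (hJ' n hn).2.2, hC'U,
        fun j hj => (hJ' j hj).1⟩, hpgt m hmJ, hC'cl⟩)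
  set Cs : ℕ → Set X := fun t => (f t).1 with hCs
  set ms : ℕ → ℕ := fun t => (f t).2.2 with hms'
  have hmsmono : StrictMono ms := strictMono_nat_of_lt_succ fun t => (hR t).1
  have hcl : ∀ t, closure (Cs (t + 1)) ⊆ Cs t := fun t => (hR t).2
  have hCo : ∀ t, IsOpen (Cs t) := fun t => (hInv t).1
  have hCU : ∀ t, Cs t ⊆ U (ms t) := fun t => (hInv t).2.2.2.1
  have hCne : ∀ t, (Cs t).Nonempty := by
    intro t
    obtain ⟨n, hn⟩ := (hInv t).2.1.nonempty
    obtain ⟨x, hx⟩ := (hInv t).2.2.1 n hn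
    exact ⟨x, hx.2⟩
  have hanti : Antitone Cs :=
    antitone_nat_of_succ_le fun t => subset_closure.trans (hcl t)
  by_cases hD : {t | (Cs t \ closure (Cs (t + 1))).Nonempty}.Infinite
  · set ψ : ℕ → ℕ := Nat.nth fun t => (Cs t \ closure (Cs (t + 1))).Nonempty with hψ'
    have hψ : StrictMono ψ := Nat.nth_strictMono hD
    have hmem : ∀ k, (Cs (ψ k) \ closure (Cs (ψ k + 1))).Nonempty := fun k =>
      Nat.nth_mem_of_infinite hD k
    refine no_disjoint_family_stmt5 hP hfin (fun k => Cs (ψ k) \ closure (Cs (ψ k + 1)))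
      (fun k => ms (ψ k)) (hmsmono.comp hψ)
      (fun k => (hCo _).sdiff isClosed_closure) hmem
      (fun k => diff_subset.trans (hCU _)) ?_
    intro j k hjk
    rw [Set.disjoint_left]
    intro x hxj hxk
    have hle : ψ j + 1 ≤ ψ k := hψ hjk
    exact hxj.2 (subset_closure (hanti hle hxk.1))
  · rw [Set.not_infinite] at hD
    obtain ⟨T, hT⟩ := hD.bddAbove
    have hsub : ∀ t, T < t → Cs t = closure (Cs (t + 1)) := by
      intro t ht
      have hnot : ¬(Cs t \ closure (Cs (t + 1))).Nonempty := fun h =>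
        absurd (hT h) (by omega)
      exact subset_antisymm (Set.diff_eq_empty.mp (Set.not_nonempty_iff_eq_empty.mp hnot))
        (hcl t)
    have hconst : ∀ t, T < t → Cs t = Cs (t + 1) := by
      intro t ht
      rw [hsub t ht, hsub (t + 1) (by omega), closure_closure, ← hsub (t + 1) (by omega)]
    have hconst' : ∀ t, T + 1 ≤ t → Cs t = Cs (T + 1) := by
      intro t ht
      induction t, ht using Nat.le_induction with
      | base => rfl
      | succ n hn ih => rw [← hconst n (by omega), ih]
    obtain ⟨p, hp⟩ := hCne (T + 1)
    have hsubU : ms '' Set.Ici (T + 1) ⊆ {n | (U n ∩ ({p} : Set X)).Nonempty} := by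
      rintro n ⟨t, ht, rfl⟩
      have hpt : p ∈ Cs t := by rw [hconst' t ht]; exact hp
      exact ⟨p, hCU t hpt, rfl⟩
    have hinf : {n | (U n ∩ ({p} : Set X)).Nonempty}.Infinite :=
      (((Set.Ici_infinite (T + 1)).image hmsmono.injective.injOn).mono hsubU)
    exact (hfin {p} isCompact_singleton).not_infinite hinf

end AuxStmt5

theorem stmt5 (X : Type*) [TopologicalSpace X] [T35Space X] :
    FrolikPStar X ↔ SelectivelyOmegaBounded X := by
  classical
  constructor
  · intro hP U hUo hUne
    obtain ⟨K, hK, hinf⟩ := key_stmt5 hP U hUo hUne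
    refine ⟨fun n => if h : (U n ∩ K).Nonempty then h.choose else (hUne n).choose, ?_,
      Nat.nth fun n => (U n ∩ K).Nonempty, Nat.nth_strictMono hinf, ?_⟩
    · intro n
      by_cases h : (U n ∩ K).Nonempty
      · simp only [dif_pos h]
        exact h.choose_spec.1
      · simp only [dif_neg h]
        exact (hUne n).choose_spec
    · have hsub : Set.range ((fun n => if h : (U n ∩ K).Nonempty then h.choose
          else (hUne n).choose) ∘ Nat.nth fun n => (U n ∩ K).Nonempty) ⊆ K := by
        rintro y ⟨k, rfl⟩
        have h := Nat.nth_mem_of_infinite hinf k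
        simp only [Function.comp_apply, dif_pos h]
        exact h.choose_spec.2
      exact hK.of_isClosed_subset isClosed_closure (closure_minimal hsub hK.isClosed)
  · intro hSel V hVo hVne _
    obtain ⟨x, hx, φ, hφ, hcomp⟩ := hSel V hVo hVne
    refine ⟨closure (Set.range (x ∘ φ)), hcomp, ?_⟩
    have hsub : Set.range φ ⊆ {n | (V n ∩ closure (Set.range (x ∘ φ))).Nonempty} := by
      rintro n ⟨k, rfl⟩
      exact ⟨x (φ k), hx (φ k), subset_closure ⟨k, rfl⟩⟩
    exact (Set.infinite_range_of_injective hφ.injective).mono hsub
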